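/- Let G be a Lie group, U ⊆ G an open connected subset with 1 ∈ U, and W ⊆ U a neighborhood of 1 in G. Then for every g ∈ U there exist n ≥ 1 and elements h₁, …, hₙ ∈ W such that every partial product hₖ * hₖ₋₁ * ⋯ * h₁ (for 1 ≤ k ≤ n) lies in U, and hₙ * hₙ₋₁ * ⋯ * h₁ = g. -/

import Mathlib

/-- **A neighborhood of the identity generates a connected local Lie group.**
Let `G` be a Lie group, `U ⊆ G` an open connected subset with `1 ∈ U`, and `W ⊆ U` a
neighborhood of `1` in `G`.  Then every `g ∈ U` can be written as a well-defined iterated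
product `hₙ * ⋯ * h₁` of elements of `W` (`n ≥ 1`), all of whose partial products
`hₖ * ⋯ * h₁` lie in `U`. -/
theorem neighborhood_generates
    {E : Type*} [NormedAddCommGroup E] [NormedSpace ℝ E]
    {H : Type*} [TopologicalSpace H] (I : ModelWithCorners ℝ E H)
    {G : Type*} [TopologicalSpace G] [ChartedSpace H G] [Group G] [LieGroup I (⊤ : ℕ∞) G]
    (U : Set G) (hUopen : IsOpen U) (hUconn : IsConnected U) (h1U : (1 : G) ∈ U)
    (W : Set G) (hW : W ∈ nhds (1 : G)) (hWU : W ⊆ U) :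
    ∀ g ∈ U, ∃ l : List G, l ≠ [] ∧ (∀ x ∈ l, x ∈ W) ∧
      (∀ k : ℕ, 1 ≤ k → k ≤ l.length → ((l.take k).reverse).prod ∈ U) ∧
      l.reverse.prod = g := by
  set P : G → Prop := fun g => ∃ l : List G, l ≠ [] ∧ (∀ x ∈ l, x ∈ W) ∧
      (∀ k : ℕ, 1 ≤ k → k ≤ l.length → ((l.take k).reverse).prod ∈ U) ∧
      l.reverse.prod = g with hPdef
  haveI : IsTopologicalGroup G := topologicalGroup_of_lieGroup I (⊤ : ℕ∞)
  have h1W : (1 : G) ∈ W := mem_of_mem_nhds hW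
  -- extension step
  have step : ∀ h ∈ U, ∀ g : G, P g → h * g⁻¹ ∈ W → P h := by
    rintro h hh g ⟨l, hne, hlW, hpart, hprod⟩ haW
    refine ⟨l ++ [h * g⁻¹], by simp, ?_, ?_, ?_⟩
    · intro x hx
      rcases List.mem_append.mp hx with hx | hx
      · exact hlW x hx
      · rw [List.mem_singleton] at hx
        rw [hx]; exact haW
    · intro k hk1 hk2
      simp only [List.length_append, List.length_singleton] at hk2
      rcases lt_or_eq_of_le hk2 with hlt | heq
      · have hk : k ≤ l.length := Nat.lt_succ_iff.mp hlt
        rw [List.take_append_of_le_length hk]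
        exact hpart k hk1 hk
      · have : (l ++ [h * g⁻¹]).length ≤ k := by
          simp [heq]
        rw [List.take_of_length_le this, List.reverse_append]
        simpa [hprod] using hh
    · rw [List.reverse_append]
      simp [hprod]
  have base : P 1 := by
    refine ⟨[1], by simp, by simpa using h1W, ?_, by simp⟩
    intro k hk1 hk2
    simp only [List.length_singleton] at hk2
    have hk : k = 1 := le_antisymm hk2 hk1
    subst hk
    simpa using h1U
  -- the two relatively open pieces
  have hSopen : IsOpen {g | g ∈ U ∧ P g} := by
    rw [isOpen_iff_mem_nhds]
    intro g hg
    have hcont : Continuous fun h : G => h * g⁻¹ := continuous_mul_right _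
    have hmem : ((fun h : G => h * g⁻¹) ⁻¹' interior W) ∩ U ∈ nhds g := by
      refine Filter.inter_mem ?_ (hUopen.mem_nhds hg.1)
      refine (isOpen_interior.preimage hcont).mem_nhds ?_
      simp [mem_interior_iff_mem_nhds.mpr hW]
    filter_upwards [hmem] with h ⟨hhW, hhU⟩
    exact ⟨hhU, step h hhU g hg.2 (interior_subset hhW)⟩
  have hTopen : IsOpen {g | g ∈ U ∧ ¬ P g} := by
    rw [isOpen_iff_mem_nhds]
    intro g hg
    have hcont : Continuous fun h : G => g * h⁻¹ := continuous_const.mul continuous_inv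
    have hmem : ((fun h : G => g * h⁻¹) ⁻¹' interior W) ∩ U ∈ nhds g := by
      refine Filter.inter_mem ?_ (hUopen.mem_nhds hg.1)
      refine (isOpen_interior.preimage hcont).mem_nhds ?_
      simp [mem_interior_iff_mem_nhds.mpr hW]
    filter_upwards [hmem] with h ⟨hhW, hhU⟩
    refine ⟨hhU, fun hPh => hg.2 ?_⟩
    exact step g hg.1 h hPh (interior_subset hhW)
  intro g hg
  by_contra hPg
  have hne : (U ∩ ({g | g ∈ U ∧ P g} ∩ {g | g ∈ U ∧ ¬ P g})).Nonempty := by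
    refine hUconn.isPreconnected _ _ hSopen hTopen ?_ ⟨1, h1U, h1U, base⟩
      ⟨g, hg, hg, hPg⟩
    intro x hx
    by_cases hx' : P x
    · exact Or.inl ⟨hx, hx'⟩
    · exact Or.inr ⟨hx, hx'⟩
  obtain ⟨x, -, ⟨-, hx1⟩, ⟨-, hx2⟩⟩ := hne
  exact hx2 hx1
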